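/- Let P ⊆ ℝ^d be a polytrope of affine dimension d. Then P is a tropical simplex: there exist d+1 points v_0, v_1, …, v_d ∈ ℝ^d with P = tconv{v_0, v_1, …, v_d}; moreover, P is not the tropical convex hull of any set of at most d points. -/

import Mathlib

open Set

noncomputable section

/-- Extended (homogeneous) coordinates of a point of `TA^d ≅ ℝ^d`:
the 0-th coordinate is normalized to `0`. -/
def ext {d : ℕ} (x : Fin d → ℝ) : Fin (d + 1) → ℝ := Fin.cons 0 x

/-- The tropical combination of `(l, x)` and `(m, y)`. -/
def tropComb {d : ℕ} (l m : ℝ) (x y : Fin d → ℝ) : Fin d → ℝ :=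
  fun i => min (l + x i) (m + y i) - min l m

/-- A set is tropically convex if it is closed under tropical combinations. -/
def TropConvex {d : ℕ} (S : Set (Fin d → ℝ)) : Prop :=
  ∀ x ∈ S, ∀ y ∈ S, ∀ l m : ℝ, tropComb l m x y ∈ S

/-- The tropical convex hull: the intersection of all tropically convex supersets. -/
def tconv {d : ℕ} (V : Set (Fin d → ℝ)) : Set (Fin d → ℝ) :=
  ⋂₀ {S : Set (Fin d → ℝ) | TropConvex S ∧ V ⊆ S}

section Basic
variable {d : ℕ}

@[simp] lemma ext_zero (x : Fin d → ℝ) : ext x 0 = 0 := rfl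

@[simp] lemma ext_succ (x : Fin d → ℝ) (i : Fin d) : ext x i.succ = x i :=
  Fin.cons_succ (α := fun _ => ℝ) 0 x i

lemma ext_add (x y : Fin d → ℝ) (i : Fin (d+1)) :
    ext (x + y) i = ext x i + ext y i := by
  induction i using Fin.cases <;> simp

lemma ext_smul (c : ℝ) (x : Fin d → ℝ) (i : Fin (d+1)) :
    ext (c • x) i = c * ext x i := by
  induction i using Fin.cases <;> simp

lemma ext_combo (a b : ℝ) (x y : Fin d → ℝ) (i : Fin (d+1)) :
    ext (a • x + b • y) i = a * ext x i + b * ext y i := by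
  rw [ext_add, ext_smul, ext_smul]

lemma continuous_ext (i : Fin (d+1)) : Continuous fun x : Fin d → ℝ => ext x i := by
  induction i using Fin.cases with
  | zero => simpa using continuous_const
  | succ j => simpa using continuous_apply j

lemma ext_tropComb (l m : ℝ) (x y : Fin d → ℝ) (i : Fin (d+1)) :
    ext (tropComb l m x y) i = min (l + ext x i) (m + ext y i) - min l m := by
  induction i using Fin.cases <;> simp [tropComb]

lemma ext_eq_iff {x y : Fin d → ℝ} : x = y ↔ ∀ i, ext x i = ext y i := by
  constructor
  · rintro rfl i; rfl
  · intro h; funext i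
    have := h i.succ; simpa using this

-- tconv basics
lemma subset_tconv (V : Set (Fin d → ℝ)) : V ⊆ tconv V := by
  intro x hx S hS; exact hS.2 hx

lemma tconv_subset {V S : Set (Fin d → ℝ)} (hS : TropConvex S) (hVS : V ⊆ S) :
    tconv V ⊆ S := fun _ hx => hx S ⟨hS, hVS⟩

lemma tropConvex_tconv (V : Set (Fin d → ℝ)) : TropConvex (tconv V) := by
  intro x hx y hy l m S hS
  exact hS.1 x (hx S hS) y (hy S hS) l m

lemma tconv_empty : tconv (∅ : Set (Fin d → ℝ)) = ∅ := by
  apply subset_antisymm _ (empty_subset _)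
  exact tconv_subset (by intro x hx; exact absurd hx (by simp)) (by simp)

end Basic

section InfHelpers

variable {ι : Type*}

lemma inf'_add_const (s : Finset ι) (h : s.Nonempty) (f : ι → ℝ) (c : ℝ) :
    s.inf' h (fun k => f k + c) = s.inf' h f + c := by
  induction h using Finset.Nonempty.cons_induction with
  | singleton a => simp
  | cons a s ha hs ih =>
    rw [Finset.inf'_cons (H := hs), Finset.inf'_cons (H := hs), ih]
    exact min_add_add_right _ _ _

lemma inf'_sub_const (s : Finset ι) (h : s.Nonempty) (f : ι → ℝ) (c : ℝ) :
    s.inf' h (fun k => f k - c) = s.inf' h f - c := by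
  simpa [sub_eq_add_neg] using inf'_add_const s h f (-c)

lemma const_add_inf' (s : Finset ι) (h : s.Nonempty) (f : ι → ℝ) (c : ℝ) :
    s.inf' h (fun k => c + f k) = c + s.inf' h f := by
  simp only [add_comm c]; exact inf'_add_const s h f c

lemma inf'_min_distrib (s : Finset ι) (h : s.Nonempty) (f g : ι → ℝ) :
    s.inf' h (fun k => min (f k) (g k)) = min (s.inf' h f) (s.inf' h g) := by
  induction h using Finset.Nonempty.cons_induction with
  | singleton a => simp
  | cons a s ha hs ih =>
    rw [Finset.inf'_cons (H := hs), Finset.inf'_cons (H := hs), Finset.inf'_cons (H := hs), ih]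
    exact min_min_min_comm _ _ _ _

lemma continuous_inf' {α : Type*} [TopologicalSpace α] (s : Finset ι) (h : s.Nonempty)
    (f : ι → α → ℝ) (hf : ∀ k, Continuous (f k)) :
    Continuous fun a => s.inf' h (fun k => f k a) :=
  Continuous.finset_inf'_apply h (fun i _ => hf i)

end InfHelpers

section ThomSec
variable {d : ℕ}

/-- Tropical combinations of the family `v`. -/
def Thom {d n : ℕ} (v : Fin (n+1) → Fin d → ℝ) : Set (Fin d → ℝ) :=
  {x | ∃ l : Fin (n+1) → ℝ, ∀ i : Fin (d+1),
     ext x i = Finset.univ.inf' Finset.univ_nonempty (fun k => l k + ext (v k) i)}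

lemma inf'_univ_succ {n : ℕ} (g : Fin (n+2) → ℝ) :
    Finset.univ.inf' Finset.univ_nonempty g
      = min (g 0) (Finset.univ.inf' Finset.univ_nonempty (fun k : Fin (n+1) => g k.succ)) := by
  apply le_antisymm
  · apply le_min
    · exact Finset.inf'_le _ (Finset.mem_univ _)
    · apply Finset.le_inf'
      intro k _
      exact Finset.inf'_le _ (Finset.mem_univ _)
  · apply Finset.le_inf'
    intro k _
    induction k using Fin.cases with
    | zero => exact min_le_left _ _
    | succ j => exact le_trans (min_le_right _ _) (Finset.inf'_le _ (Finset.mem_univ j))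

lemma tropConvex_thom {n : ℕ} (v : Fin (n+1) → Fin d → ℝ) : TropConvex (Thom v) := by
  rintro x ⟨lx, hx⟩ y ⟨ly, hy⟩ l m
  refine ⟨fun k => min (l + lx k) (m + ly k) - min l m, fun i => ?_⟩
  rw [ext_tropComb, hx i, hy i]
  have h1 : (Finset.univ.inf' Finset.univ_nonempty
        fun k => (min (l + lx k) (m + ly k) - min l m) + ext (v k) i)
      = Finset.univ.inf' Finset.univ_nonempty
        (fun k : Fin (n+1) => min (l + (lx k + ext (v k) i)) (m + (ly k + ext (v k) i)))
          - min l m := by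
    rw [← inf'_sub_const]
    refine Finset.inf'_congr Finset.univ_nonempty rfl (fun k _ => ?_)
    rw [sub_add_eq_add_sub, ← min_add_add_right]
    simp [add_assoc]
  rw [h1, inf'_min_distrib, const_add_inf', const_add_inf']

lemma mem_thom_self {n : ℕ} (v : Fin (n+1) → Fin d → ℝ) (k₀ : Fin (n+1)) :
    v k₀ ∈ Thom v := by
  classical
  set B := Finset.univ.sup' Finset.univ_nonempty
    (fun p : Fin (n+1) × Fin (d+1) => |ext (v p.1) p.2|) with hB
  have hBd : ∀ (k : Fin (n+1)) (i : Fin (d+1)), |ext (v k) i| ≤ B := by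
    intro k i
    exact Finset.le_sup' (f := fun p : Fin (n+1) × Fin (d+1) => |ext (v p.1) p.2|)
      (Finset.mem_univ (k, i))
  refine ⟨fun j => if j = k₀ then 0 else 2*B + 1, fun i => ?_⟩
  apply le_antisymm
  · apply Finset.le_inf'
    intro j _
    by_cases hj : j = k₀
    · simp [hj]
    · simp only [hj, if_false]
      have h1 : ext (v k₀) i ≤ B := le_trans (le_abs_self _) (hBd k₀ i)
      have h2 : -B ≤ ext (v j) i := by
        have := hBd j i
        have := neg_abs_le (ext (v j) i)
        linarith [abs_nonneg (ext (v j) i), hBd j i, neg_abs_le (ext (v j) i)]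
      have hB0 : 0 ≤ B := le_trans (abs_nonneg _) (hBd k₀ i)
      linarith
  · have := Finset.inf'_le
      (fun k => (if k = k₀ then (0:ℝ) else 2*B + 1) + ext (v k) i) (Finset.mem_univ k₀)
    simp only [↓reduceIte, zero_add] at this
    exact this

lemma thom_subset {n : ℕ} (v : Fin (n+1) → Fin d → ℝ) (S : Set (Fin d → ℝ))
    (hS : TropConvex S) (hv : ∀ k, v k ∈ S) : Thom v ⊆ S := by
  induction n with
  | zero =>
    rintro x ⟨l, hl⟩
    have hx0 : ∀ i : Fin (d+1), ext x i = l 0 + ext (v 0) i := by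
      intro i
      rw [hl i]
      apply le_antisymm
      · exact Finset.inf'_le _ (Finset.mem_univ 0)
      · apply Finset.le_inf'
        intro k _
        have : k = 0 := Fin.eq_zero k
        simp [this]
    have hl0 : l 0 = 0 := by
      have := hx0 0
      simpa using this.symm
    have : x = v 0 := by
      rw [ext_eq_iff]
      intro i
      rw [hx0 i, hl0, zero_add]
    rw [this]; exact hv 0
  | succ n ih =>
    rintro x ⟨l, hl⟩
    -- tail infima
    set Yh : Fin (d+1) → ℝ := fun i => Finset.univ.inf' Finset.univ_nonempty
      (fun k : Fin (n+1) => l k.succ + ext (v k.succ) i) with hYh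
    have hsplit : ∀ i : Fin (d+1), ext x i = min (l 0 + ext (v 0) i) (Yh i) := by
      intro i
      rw [hl i, inf'_univ_succ]
    set y : Fin d → ℝ := fun i => Yh i.succ - Yh 0 with hy
    have hyext : ∀ i : Fin (d+1), ext y i = Yh i - Yh 0 := by
      intro i
      induction i using Fin.cases with
      | zero => simp
      | succ j => simp [hy]
    have hyS : y ∈ S := by
      refine ih (fun k => v k.succ) (fun k => hv k.succ) ⟨fun k => l k.succ - Yh 0, fun i => ?_⟩
      rw [hyext i, hYh]
      rw [← inf'_sub_const]
      exact Finset.inf'_congr Finset.univ_nonempty rfl (fun k _ => by ring)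
    have hx0 : (0:ℝ) = min (l 0) (Yh 0) := by
      have := hsplit 0
      simpa using this
    have : x = tropComb (Yh 0) (l 0) y (v 0) := by
      rw [ext_eq_iff]
      intro i
      have e1 : Yh 0 + (Yh i - Yh 0) = Yh i := by ring
      have e2 : min (Yh 0) (l 0) = 0 := by rw [min_comm]; exact hx0.symm
      rw [ext_tropComb, hyext i, hsplit i, e1, e2, sub_zero,
        min_comm (Yh i) (l 0 + ext (v 0) i)]
    rw [this]
    exact hS y hyS (v 0) (hv 0) (Yh 0) (l 0)

lemma tconv_range_eq_thom {n : ℕ} (v : Fin (n+1) → Fin d → ℝ) :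
    tconv (Set.range v) = Thom v := by
  apply le_antisymm
  · apply tconv_subset (tropConvex_thom v)
    rintro x ⟨k, rfl⟩
    exact mem_thom_self v k
  · intro x hx S hS
    exact thom_subset v S hS.1 (fun k => hS.2 ⟨k, rfl⟩) hx

/-- canonical coefficients -/
lemma thom_canonical {n : ℕ} (v : Fin (n+1) → Fin d → ℝ) {x : Fin d → ℝ}
    (hx : x ∈ Thom v) (i : Fin (d+1)) :
    ext x i = Finset.univ.inf' Finset.univ_nonempty
      (fun k => Finset.univ.sup' Finset.univ_nonempty
        (fun j => ext x j - ext (v k) j) + ext (v k) i) := by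
  obtain ⟨l, hl⟩ := hx
  apply le_antisymm
  · apply Finset.le_inf'
    intro k _
    have : ext x i - ext (v k) i ≤ Finset.univ.sup' Finset.univ_nonempty
        (fun j => ext x j - ext (v k) j) :=
      Finset.le_sup' (f := fun j => ext x j - ext (v k) j) (Finset.mem_univ i)
    linarith
  · have hcan : ∀ k, Finset.univ.sup' Finset.univ_nonempty
        (fun j => ext x j - ext (v k) j) ≤ l k := by
      intro k
      apply Finset.sup'_le
      intro j _
      have : ext x j ≤ l k + ext (v k) j := by
        rw [hl j]
        exact Finset.inf'_le _ (Finset.mem_univ k)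
      linarith
    rw [hl i]
    apply Finset.le_inf'
    intro k _
    have h2 := hcan k
    have : Finset.univ.inf' Finset.univ_nonempty
        (fun k' => Finset.univ.sup' Finset.univ_nonempty
          (fun j => ext x j - ext (v k') j) + ext (v k') i)
        ≤ Finset.univ.sup' Finset.univ_nonempty
          (fun j => ext x j - ext (v k) j) + ext (v k) i :=
      Finset.inf'_le _ (Finset.mem_univ k)
    linarith

end ThomSec


section CompactSec
variable {d : ℕ}

lemma thom_nonneg_coeff {n : ℕ} {v : Fin (n+1) → Fin d → ℝ} {x : Fin d → ℝ}
    {l : Fin (n+1) → ℝ}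
    (hl : ∀ i : Fin (d+1), ext x i = Finset.univ.inf' Finset.univ_nonempty
      (fun k => l k + ext (v k) i)) :
    Finset.univ.inf' Finset.univ_nonempty l = 0 := by
  have h0 := (hl 0).symm
  rw [ext_zero] at h0
  rw [← h0]
  exact Finset.inf'_congr Finset.univ_nonempty rfl (fun k _ => by simp)

lemma isCompact_thom {n : ℕ} (v : Fin (n+1) → Fin d → ℝ) : IsCompact (Thom v) := by
  classical
  set B := Finset.univ.sup' Finset.univ_nonempty
    (fun p : Fin (n+1) × Fin (d+1) => |ext (v p.1) p.2|) with hB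
  have hBd : ∀ (k : Fin (n+1)) (i : Fin (d+1)), |ext (v k) i| ≤ B := fun k i =>
    Finset.le_sup' (f := fun p : Fin (n+1) × Fin (d+1) => |ext (v p.1) p.2|)
      (Finset.mem_univ (k, i))
  have hB0 : 0 ≤ B := le_trans (abs_nonneg _) (hBd 0 0)
  set M : ℝ := 2*B + 1 with hM
  set Φ : (Fin (n+1) → ℝ) → (Fin d → ℝ) := fun l => fun i : Fin d =>
    Finset.univ.inf' Finset.univ_nonempty (fun k => l k + ext (v k) i.succ)
      - Finset.univ.inf' Finset.univ_nonempty l with hΦ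
  have hcont : Continuous Φ := by
    apply continuous_pi
    intro i
    apply Continuous.sub
    · exact continuous_inf' _ _ _ (fun k => (continuous_apply k).add continuous_const)
    · exact continuous_inf' _ _ _ (fun k => (continuous_apply k))
  have himg : Thom v = Φ '' (Set.Icc 0 (fun _ => M)) := by
    apply Set.Subset.antisymm
    · rintro x ⟨l, hl⟩
      have hinf0 : Finset.univ.inf' Finset.univ_nonempty l = 0 := thom_nonneg_coeff hl
      have hl0 : ∀ k, 0 ≤ l k := by
        intro k
        rw [← hinf0]
        exact Finset.inf'_le _ (Finset.mem_univ k)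
      obtain ⟨k₀, _, hk₀⟩ := Finset.exists_mem_eq_inf' Finset.univ_nonempty l
      rw [hinf0] at hk₀
      set l' : Fin (n+1) → ℝ := fun k => min (l k) M with hl'
      have key : ∀ i : Fin (d+1),
          Finset.univ.inf' Finset.univ_nonempty (fun k => l' k + ext (v k) i)
            = Finset.univ.inf' Finset.univ_nonempty (fun k => l k + ext (v k) i) := by
        intro i
        apply le_antisymm
        · apply Finset.le_inf'
          intro k _
          refine le_trans (Finset.inf'_le _ (Finset.mem_univ k)) ?_
          have : l' k ≤ l k := min_le_left _ _
          linarith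
        · apply Finset.le_inf'
          intro k _
          by_cases hk : l k ≤ M
          · have : l' k = l k := min_eq_left hk
            rw [this]
            exact Finset.inf'_le _ (Finset.mem_univ k)
          · push_neg at hk
            have h1 : l' k = M := min_eq_right (le_of_lt hk)
            refine le_trans (Finset.inf'_le _ (Finset.mem_univ k₀)) ?_
            rw [← hk₀, h1]
            have h2 : ext (v k₀) i ≤ B := le_trans (le_abs_self _) (hBd k₀ i)
            have h3 : -B ≤ ext (v k) i := neg_le_of_abs_le (hBd k i)
            rw [hM]
            linarith
      refine ⟨l', ?_, ?_⟩
      · rw [Set.mem_Icc]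
        constructor
        · refine Pi.le_def.mpr fun k => ?_
          simp only [Pi.zero_apply, hl']
          exact le_min (hl0 k) (by rw [hM]; linarith)
        · exact Pi.le_def.mpr fun k => min_le_right _ _
      · rw [hΦ]
        funext i
        simp only
        have e0 : Finset.univ.inf' Finset.univ_nonempty l' = 0 := by
          have := key 0
          simp only [ext_zero, add_zero] at this
          rw [this]
          exact hinf0
        rw [e0, sub_zero, key i.succ, ← hl i.succ, ext_succ]
    · rintro _ ⟨l, hlK, rfl⟩
      refine ⟨fun k => l k - Finset.univ.inf' Finset.univ_nonempty l, fun i => ?_⟩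
      induction i using Fin.cases with
      | zero =>
        simp only [ext_zero, add_zero]
        rw [inf'_sub_const]
        ring
      | succ j =>
        rw [ext_succ, hΦ]
        simp only
        rw [← inf'_sub_const]
        exact Finset.inf'_congr Finset.univ_nonempty rfl (fun k _ => by ring)
  rw [himg]
  exact (isCompact_Icc).image hcont

lemma thom_nonempty {n : ℕ} (v : Fin (n+1) → Fin d → ℝ) : (Thom v).Nonempty :=
  ⟨v 0, mem_thom_self v 0⟩

end CompactSec

section EnumSec

lemma exists_enum {α : Type*} {W : Set α} (hW : W.Finite) (hne : W.Nonempty) :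
    ∃ (m : ℕ) (w : Fin (m+1) → α), Set.range w = W ∧ m + 1 = W.ncard := by
  classical
  have hmem : ∀ a, a ∈ hW.toFinset.toList ↔ a ∈ W := by
    intro a
    rw [Finset.mem_toList, Set.Finite.mem_toFinset]
  have hLne : hW.toFinset.toList ≠ [] := by
    obtain ⟨a, ha⟩ := hne
    intro h
    have := (hmem a).mpr ha
    rw [h] at this
    simp at this
  have hpos : 0 < hW.toFinset.toList.length := List.length_pos_iff.mpr hLne
  have hlen : hW.toFinset.toList.length = W.ncard := by
    rw [Finset.length_toList]
    exact (Set.ncard_eq_toFinset_card W hW).symm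
  have h' : hW.toFinset.toList.length - 1 + 1 = hW.toFinset.toList.length := by omega
  refine ⟨hW.toFinset.toList.length - 1,
    fun k => hW.toFinset.toList.get (Fin.cast h' k), ?_, by omega⟩
  ext a
  simp only [Set.mem_range]
  constructor
  · rintro ⟨k, rfl⟩
    exact (hmem _).mp (by apply List.get_mem)
  · intro ha
    obtain ⟨i, hi⟩ := List.mem_iff_get.mp ((hmem a).mpr ha)
    refine ⟨Fin.cast h'.symm i, ?_⟩
    simpa using hi

end EnumSec

section FinBaire

lemma finite_cover_interior {α : Type*} [TopologicalSpace α] {ι : Type*}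
    (s : Finset ι) (C : ι → Set α) (hC : ∀ i, IsClosed (C i)) (F : Set α) :
    ∀ U : Set α, IsOpen U → (F ∩ U ⊆ ⋃ i ∈ s, C i) → (F ∩ U).Nonempty →
    ∃ i ∈ s, ∃ V : Set α, IsOpen V ∧ V ⊆ U ∧ (F ∩ V).Nonempty ∧ F ∩ V ⊆ C i := by
  classical
  induction s using Finset.induction_on with
  | empty =>
    intro U _ hcov hne
    obtain ⟨x, hx⟩ := hne
    simpa using hcov hx
  | @insert i₀ t hni ih =>
    intro U hU hcov hne
    by_cases hcase : (F ∩ (U ∩ (⋃ i ∈ t, C i)ᶜ)).Nonempty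
    · refine ⟨i₀, Finset.mem_insert_self _ _, U ∩ (⋃ i ∈ t, C i)ᶜ, ?_, inter_subset_left, hcase, ?_⟩
      · exact hU.inter (isClosed_biUnion_finset (fun i _ => hC i)).isOpen_compl
      · rintro x ⟨hxF, hxU, hxC⟩
        have := hcov ⟨hxF, hxU⟩
        simp only [Finset.mem_insert, Set.mem_iUnion] at this
        obtain ⟨i, hi | hi, hxi⟩ := this
        · rwa [hi] at hxi
        · exact absurd (Set.mem_biUnion hi hxi) hxC
    · have hcov' : F ∩ U ⊆ ⋃ i ∈ t, C i := by
        intro x hx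
        by_contra hxC
        exact hcase ⟨x, hx.1, hx.2, hxC⟩
      obtain ⟨i, hi, V, h1, h2, h3, h4⟩ := ih U hU hcov' hne
      exact ⟨i, Finset.mem_insert_of_mem hi, V, h1, h2, h3, h4⟩

end FinBaire
section OneSided

open Filter Topology

lemma one_sided {d : ℕ} {P : Set (Fin d → ℝ)} (hconv : Convex ℝ P) (hcl : IsClosed P)
    (hint : (interior P).Nonempty)
    {g : (Fin d → ℝ) → ℝ} (hg : IsLinearMap ℝ g)
    {u : Fin d → ℝ} (hu : 0 < g u)
    {x₀ : Fin d → ℝ} {ρ : ℝ} (hρ : 0 < ρ) (hx₀ : x₀ ∈ frontier P)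
    {γ : ℝ} (hγ : g x₀ = γ)
    (hfr : ∀ y ∈ frontier P ∩ Metric.ball x₀ ρ, g y = γ) :
    (∀ x ∈ P, g x ≤ γ) ∨ (∀ x ∈ P, γ ≤ g x) := by
  have hfrP : frontier P ⊆ P := by
    rw [IsClosed.frontier_eq hcl]
    exact diff_subset
  have hPx₀ : x₀ ∈ P := hfrP hx₀
  have hx₀ni : x₀ ∉ interior P := by
    rw [IsClosed.frontier_eq hcl] at hx₀
    exact hx₀.2
  set B := Metric.ball x₀ ρ with hBdef
  have hBopen : IsOpen B := Metric.isOpen_ball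
  have hx₀B : x₀ ∈ B := Metric.mem_ball_self hρ
  have glin : ∀ (y w : Fin d → ℝ) (t : ℝ), g (y + t • w) = g y + t * g w := by
    intro y w t
    rw [hg.map_add, hg.map_smul, smul_eq_mul]
  have tendsto_step : ∀ (y w : Fin d → ℝ),
      Filter.Tendsto (fun t : ℝ => y + t • w) (𝓝[>] 0) (𝓝 y) := by
    intro y w
    have h1 : Filter.Tendsto (fun t : ℝ => y + t • w) (𝓝 0) (𝓝 (y + (0:ℝ) • w)) := by
      apply Filter.Tendsto.add tendsto_const_nhds
      exact (continuous_id.smul continuous_const).tendsto 0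
    simpa using h1.mono_left nhdsWithin_le_nhds
  have step1 : ∀ y, y ∈ P → y ∈ B → g y ≠ γ → y ∈ interior P := by
    intro y hyP hyB hyg
    by_contra hyi
    have : y ∈ frontier P := by
      rw [IsClosed.frontier_eq hcl]
      exact ⟨hyP, hyi⟩
    exact hyg (hfr y ⟨this, hyB⟩)
  have sideP : ∀ (hs : Set ℝ), IsOpen hs → Convex ℝ {x | g x ∈ hs} →
      (∀ t ∈ hs, t ≠ γ) → (P ∩ (B ∩ {x | g x ∈ hs})).Nonempty →
        B ∩ {x | g x ∈ hs} ⊆ interior P := by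
    intro hs hso hcv hne hmeets
    have hpre : IsPreconnected (B ∩ {x | g x ∈ hs}) :=
      ((convex_ball x₀ ρ).inter hcv).isPreconnected
    have hsub : B ∩ {x | g x ∈ hs} ⊆ interior P ∪ Pᶜ := by
      rintro y ⟨hyB, hyg⟩
      by_cases hyP : y ∈ P
      · exact Or.inl (step1 y hyP hyB (hne _ hyg))
      · exact Or.inr hyP
    have hdisj : Disjoint (interior P) Pᶜ :=
      Set.disjoint_left.mpr (fun y hy hyc => hyc (interior_subset hy))
    rcases hpre.subset_or_subset isOpen_interior hcl.isOpen_compl hdisj hsub with h | h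
    · exact h
    · obtain ⟨y, hyP, hyB⟩ := hmeets
      exact absurd (h hyB) (by simpa using hyP)
  have both_impossible :
      ¬ ((P ∩ (B ∩ {x | γ < g x})).Nonempty ∧ (P ∩ (B ∩ {x | g x < γ})).Nonempty) := by
    rintro ⟨hp, hm⟩
    have hup : B ∩ {x | γ < g x} ⊆ interior P :=
      sideP (Set.Ioi γ) isOpen_Ioi (convex_halfSpace_gt hg γ) (fun t ht => ne_of_gt ht) hp
    have hdn : B ∩ {x | g x < γ} ⊆ interior P :=
      sideP (Set.Iio γ) isOpen_Iio (convex_halfSpace_lt hg γ) (fun t ht => ne_of_lt ht) hm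
    have hBP : B ⊆ P := by
      intro y hyB
      rcases lt_trichotomy (g y) γ with h | h | h
      · exact interior_subset (hdn ⟨hyB, h⟩)
      · have hev : ∀ᶠ t in 𝓝[>] (0:ℝ), y + t • u ∈ P := by
          have hevB : ∀ᶠ t in 𝓝[>] (0:ℝ), y + t • u ∈ B :=
            (tendsto_step y u).eventually (hBopen.mem_nhds hyB)
          filter_upwards [hevB, self_mem_nhdsWithin] with t htB ht0
          refine interior_subset (hup ⟨htB, ?_⟩)
          show γ < g (y + t • u)
          rw [glin, h]
          have : 0 < t * g u := mul_pos ht0 hu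
          linarith
        exact hcl.mem_of_tendsto (tendsto_step y u) hev
      · exact interior_subset (hup ⟨hyB, h⟩)
    exact hx₀ni (mem_interior.mpr ⟨B, hBP, hBopen, hx₀B⟩)
  have some_side : (P ∩ (B ∩ {x | γ < g x})).Nonempty ∨
      (P ∩ (B ∩ {x | g x < γ})).Nonempty := by
    obtain ⟨q₀, hq₀⟩ := hint
    -- find an interior point of P inside B
    have hevI : ∀ᶠ t in 𝓝[>] (0:ℝ), (x₀ + t • (q₀ - x₀) ∈ interior P ∩ B ∧ 0 < t ∧ t ≤ 1) := by
      have hevB : ∀ᶠ t in 𝓝[>] (0:ℝ), x₀ + t • (q₀ - x₀) ∈ B :=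
        (tendsto_step x₀ (q₀ - x₀)).eventually (hBopen.mem_nhds hx₀B)
      have hev1 : ∀ᶠ t in 𝓝[>] (0:ℝ), t ≤ 1 :=
        eventually_nhdsWithin_of_eventually_nhds
          (Filter.Tendsto.eventually_le_const (by norm_num : (0:ℝ) < 1) tendsto_id)
      filter_upwards [hevB, hev1, self_mem_nhdsWithin] with t htB ht1 ht0
      exact ⟨⟨hconv.add_smul_sub_mem_interior hPx₀ hq₀ ⟨ht0, ht1⟩, htB⟩, ht0, ht1⟩
    obtain ⟨t, ⟨hzI, hzB⟩, ht0, ht1⟩ := hevI.exists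
    set z := x₀ + t • (q₀ - x₀) with hz
    rcases lt_trichotomy (g z) γ with h | h | h
    · exact Or.inr ⟨z, interior_subset hzI, hzB, h⟩
    · -- g z = γ : wiggle with u
      have hev2 : ∀ᶠ s in 𝓝[>] (0:ℝ), z + s • u ∈ interior P ∩ B := by
        have h1 : ∀ᶠ s in 𝓝[>] (0:ℝ), z + s • u ∈ interior P :=
          (tendsto_step z u).eventually (isOpen_interior.mem_nhds hzI)
        have h2 : ∀ᶠ s in 𝓝[>] (0:ℝ), z + s • u ∈ B :=
          (tendsto_step z u).eventually (hBopen.mem_nhds hzB)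
        filter_upwards [h1, h2] with s hs1 hs2
        exact ⟨hs1, hs2⟩
      obtain ⟨s, ⟨hsI, hsB⟩, hs0⟩ := (hev2.and self_mem_nhdsWithin).exists
      refine Or.inl ⟨z + s • u, interior_subset hsI, hsB, ?_⟩
      show γ < g (z + s • u)
      rw [glin, h]
      have : 0 < s * g u := mul_pos hs0 hu
      linarith
    · exact Or.inl ⟨z, interior_subset hzI, hzB, h⟩
  -- segment lemma: if some x ∈ P has g x < γ then the negative side meets P, etc.
  have seg_mem : ∀ x ∈ P, ∀ s : ℝ, 0 < s → s ≤ 1 → x₀ + s • (x - x₀) ∈ P := by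
    intro x hxP s hs0 hs1
    have := hconv hPx₀ hxP (by linarith : (0:ℝ) ≤ 1 - s) hs0.le (by ring)
    convert this using 1
    module
  have seg_side : ∀ x ∈ P, g x ≠ γ → ∀ᶠ s in 𝓝[>] (0:ℝ),
      (x₀ + s • (x - x₀) ∈ P ∩ B) ∧ ((g x < γ → g (x₀ + s • (x - x₀)) < γ) ∧
        (γ < g x → γ < g (x₀ + s • (x - x₀)))) := by
    intro x hxP hxg
    have hevB : ∀ᶠ s in 𝓝[>] (0:ℝ), x₀ + s • (x - x₀) ∈ B :=
      (tendsto_step x₀ (x - x₀)).eventually (hBopen.mem_nhds hx₀B)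
    have hev1 : ∀ᶠ s in 𝓝[>] (0:ℝ), s ≤ 1 :=
      eventually_nhdsWithin_of_eventually_nhds
        (Filter.Tendsto.eventually_le_const (by norm_num : (0:ℝ) < 1) tendsto_id)
    filter_upwards [hevB, hev1, self_mem_nhdsWithin] with s hsB hs1 hs0
    have hval : g (x₀ + s • (x - x₀)) = γ + s * (g x - γ) := by
      rw [glin, hg.map_sub, hγ]
    have hs0' : (0:ℝ) < s := hs0
    refine ⟨⟨seg_mem x hxP s hs0' hs1, hsB⟩, ?_, ?_⟩
    · intro hlt
      rw [hval]
      nlinarith [mul_pos hs0' (sub_pos.mpr hlt)]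
    · intro hgt
      rw [hval]
      nlinarith [mul_pos hs0' (sub_pos.mpr hgt)]
  rcases some_side with hp | hm
  · refine Or.inr ?_
    intro x hxP
    by_contra hlt
    push_neg at hlt
    obtain ⟨s, ⟨hsP, hsB⟩, hside, -⟩ := (seg_side x hxP (ne_of_lt hlt)).exists
    exact both_impossible ⟨hp, ⟨_, hsP, hsB, hside hlt⟩⟩
  · refine Or.inl ?_
    intro x hxP
    by_contra hgt
    push_neg at hgt
    obtain ⟨s, ⟨hsP, hsB⟩, -, hside⟩ := (seg_side x hxP (ne_of_gt hgt)).exists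
    exact both_impossible ⟨⟨_, hsP, hsB, hside hgt⟩, hm⟩

end OneSided

section Pieces
variable {d n : ℕ}

def pieceSet (v : Fin (n+1) → Fin d → ℝ) (τ : Fin (n+1) → Fin (d+1))
    (σ : Fin (d+1) → Fin (n+1)) : Set (Fin d → ℝ) :=
  {x | (∀ (k : Fin (n+1)) (j : Fin (d+1)),
          ext x j - ext x (τ k) ≤ ext (v k) j - ext (v k) (τ k)) ∧
       (∀ i : Fin (d+1),
          ext (v (σ i)) i - ext (v (σ i)) (τ (σ i)) ≤ ext x i - ext x (τ (σ i)))}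

lemma piece_subset_thom (v : Fin (n+1) → Fin d → ℝ) (τ : Fin (n+1) → Fin (d+1))
    (σ : Fin (d+1) → Fin (n+1)) : pieceSet v τ σ ⊆ Thom v := by
  rintro x ⟨h1, h2⟩
  refine ⟨fun k => ext x (τ k) - ext (v k) (τ k), fun i => ?_⟩
  apply le_antisymm
  · apply Finset.le_inf'
    intro k _
    have := h1 k i
    dsimp only
    linarith
  · refine le_trans (Finset.inf'_le _ (Finset.mem_univ (σ i))) ?_
    have := h2 i
    dsimp only
    linarith

lemma thom_subset_pieces (v : Fin (n+1) → Fin d → ℝ) {x : Fin d → ℝ} (hx : x ∈ Thom v) :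
    ∃ (τ : Fin (n+1) → Fin (d+1)) (σ : Fin (d+1) → Fin (n+1)), x ∈ pieceSet v τ σ := by
  classical
  have hτ : ∀ k : Fin (n+1), ∃ j : Fin (d+1),
      Finset.univ.sup' Finset.univ_nonempty (fun j => ext x j - ext (v k) j)
        = ext x j - ext (v k) j := by
    intro k
    obtain ⟨j, _, hj⟩ := Finset.exists_mem_eq_sup' Finset.univ_nonempty
      (fun j => ext x j - ext (v k) j)
    exact ⟨j, hj⟩
  choose τ hτ using hτ
  have hσ : ∀ i : Fin (d+1), ∃ k : Fin (n+1),
      ext x i = Finset.univ.sup' Finset.univ_nonempty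
        (fun j => ext x j - ext (v k) j) + ext (v k) i := by
    intro i
    obtain ⟨k, _, hk⟩ := Finset.exists_mem_eq_inf' Finset.univ_nonempty
      (fun k => Finset.univ.sup' Finset.univ_nonempty
        (fun j => ext x j - ext (v k) j) + ext (v k) i)
    exact ⟨k, by rw [thom_canonical v hx i, hk]⟩
  choose σ hσ using hσ
  refine ⟨τ, σ, ?_, ?_⟩
  · intro k j
    have h1 : ext x j - ext (v k) j ≤ ext x (τ k) - ext (v k) (τ k) := by
      rw [← hτ k]
      exact Finset.le_sup' (f := fun j => ext x j - ext (v k) j) (Finset.mem_univ j)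
    linarith
  · intro i
    have h1 := hσ i
    rw [hτ (σ i)] at h1
    linarith

lemma frontier_cover (v : Fin (n+1) → Fin d → ℝ) (x : Fin d → ℝ)
    (hcl : IsClosed (Thom v)) (hx : x ∈ frontier (Thom v)) :
    ∃ (k : Fin (n+1)) (p q : Fin (d+1)), p ≠ q ∧
      ext x p - ext x q = ext (v k) p - ext (v k) q := by
  by_contra hcon
  push_neg at hcon
  have hxT : x ∈ Thom v := by
    rw [IsClosed.frontier_eq hcl] at hx
    exact hx.1
  obtain ⟨τ, σ, hp1, hp2⟩ := thom_subset_pieces v hxT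
  -- all nontrivial constraints are strict
  set U : Set (Fin d → ℝ) :=
    (⋂ (k : Fin (n+1)), ⋂ (j : Fin (d+1)),
      {y | j ≠ τ k → ext y j - ext y (τ k) < ext (v k) j - ext (v k) (τ k)}) ∩
    (⋂ (i : Fin (d+1)),
      {y | i ≠ τ (σ i) → ext (v (σ i)) i - ext (v (σ i)) (τ (σ i)) < ext y i - ext y (τ (σ i))})
      with hU
  have hUopen : IsOpen U := by
    apply IsOpen.inter
    · apply isOpen_iInter_of_finite
      intro k
      apply isOpen_iInter_of_finite
      intro j
      by_cases hj : j = τ k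
      · have he : {y : Fin d → ℝ | j ≠ τ k →
            ext y j - ext y (τ k) < ext (v k) j - ext (v k) (τ k)} = Set.univ := by
          ext y
          simp only [Set.mem_setOf_eq, Set.mem_univ, iff_true]
          exact fun h => absurd hj h
        rw [he]; exact isOpen_univ
      · have : {y : Fin d → ℝ | j ≠ τ k →
            ext y j - ext y (τ k) < ext (v k) j - ext (v k) (τ k)}
            = {y | ext y j - ext y (τ k) < ext (v k) j - ext (v k) (τ k)} := by
          ext y; simp [hj]
        rw [this]
        exact isOpen_lt ((continuous_ext j).sub (continuous_ext (τ k))) continuous_const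
    · apply isOpen_iInter_of_finite
      intro i
      by_cases hi : i = τ (σ i)
      · have he : {y : Fin d → ℝ | i ≠ τ (σ i) →
            ext (v (σ i)) i - ext (v (σ i)) (τ (σ i)) < ext y i - ext y (τ (σ i))}
              = Set.univ := by
          ext y
          simp only [Set.mem_setOf_eq, Set.mem_univ, iff_true]
          exact fun h => absurd hi h
        rw [he]; exact isOpen_univ
      · have : {y : Fin d → ℝ | i ≠ τ (σ i) →
            ext (v (σ i)) i - ext (v (σ i)) (τ (σ i)) < ext y i - ext y (τ (σ i))}
            = {y | ext (v (σ i)) i - ext (v (σ i)) (τ (σ i)) < ext y i - ext y (τ (σ i))} := by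
          ext y; simp [hi]
        rw [this]
        exact isOpen_lt continuous_const ((continuous_ext i).sub (continuous_ext (τ (σ i))))
  have hxU : x ∈ U := by
    rw [hU]
    constructor
    · simp only [Set.mem_iInter]
      intro k j
      intro hj
      exact lt_of_le_of_ne (hp1 k j) (hcon k j (τ k) hj)
    · simp only [Set.mem_iInter]
      intro i hi
      refine lt_of_le_of_ne (hp2 i) ?_
      intro heq
      exact (hcon (σ i) i (τ (σ i)) hi) heq.symm
  have hUsub : U ⊆ pieceSet v τ σ := by
    rintro y ⟨hy1, hy2⟩
    simp only [Set.mem_iInter] at hy1 hy2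
    constructor
    · intro k j
      by_cases hj : j = τ k
      · subst hj; simp
      · exact (hy1 k j hj).le
    · intro i
      by_cases hi : i = τ (σ i)
      · rw [← hi]; simp
      · exact (hy2 i hi).le
  have : x ∈ interior (Thom v) :=
    mem_interior.mpr ⟨U, le_trans hUsub (piece_subset_thom v τ σ), hUopen, hxU⟩
  rw [IsClosed.frontier_eq hcl] at hx
  exact hx.2 this

end Pieces

section Part2
open MeasureTheory

lemma thom_volume_zero {d m : ℕ} (hm : m + 1 ≤ d) (w : Fin (m+1) → Fin d → ℝ) :
    MeasureTheory.volume (Thom w) = 0 := by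
  classical
  set A : (Fin d → Fin (m+1)) × Fin (m+1) → AffineSubspace ℝ (Fin d → ℝ) := fun p =>
    AffineSubspace.mk' (fun i => w (p.1 i) i)
      (Submodule.span ℝ ↑(Finset.image (fun k => fun (i : Fin d) =>
        if p.1 i = k then (1:ℝ) else 0) (Finset.univ.erase p.2))) with hA
  have hcov : Thom w ⊆ ⋃ p, (A p : Set (Fin d → ℝ)) := by
    rintro x hx
    obtain ⟨l, hl⟩ := hx
    have hinf0 : Finset.univ.inf' Finset.univ_nonempty l = 0 := thom_nonneg_coeff hl
    obtain ⟨k₀, _, hk₀⟩ := Finset.exists_mem_eq_inf' Finset.univ_nonempty l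
    rw [hinf0] at hk₀
    have hκ : ∀ i : Fin d, ∃ k : Fin (m+1), x i = l k + w k i := by
      intro i
      obtain ⟨k, _, hk⟩ := Finset.exists_mem_eq_inf' Finset.univ_nonempty
        (fun k => l k + ext (w k) i.succ)
      refine ⟨k, ?_⟩
      have := hl i.succ
      rw [ext_succ] at this
      rw [this, hk, ext_succ]
    choose κ hκ using hκ
    refine Set.mem_iUnion.mpr ⟨(κ, k₀), ?_⟩
    rw [hA]
    rw [SetLike.mem_coe, AffineSubspace.mem_mk']
    have hdiff : x -ᵥ (fun i => w (κ i) i)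
        = ∑ k ∈ Finset.univ.erase k₀, l k • (fun (i : Fin d) =>
            if κ i = k then (1:ℝ) else 0) := by
      funext i
      rw [Finset.sum_apply]
      have hterm : ∀ k, (l k • (fun (i : Fin d) => if κ i = k then (1:ℝ) else 0)) i
          = if κ i = k then l k else 0 := by
        intro k
        simp [mul_ite]
      rw [Finset.sum_congr rfl (fun k _ => hterm k)]
      rw [Finset.sum_ite_eq]
      by_cases hi : κ i = k₀
      · have : κ i ∉ Finset.univ.erase k₀ := by simp [hi]
        rw [if_neg this]
        have := hκ i
        rw [hi, ← hk₀] at this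
        show x i - w (κ i) i = 0
        rw [hi]
        linarith
      · have : κ i ∈ Finset.univ.erase k₀ := by simp [hi]
        rw [if_pos this]
        have := hκ i
        show x i - w (κ i) i = l (κ i)
        linarith
    rw [hdiff]
    apply Submodule.sum_mem
    intro k hk
    apply Submodule.smul_mem
    apply Submodule.subset_span
    refine Finset.mem_coe.mpr (Finset.mem_image.mpr ⟨k, ?_, rfl⟩)
    simpa using hk
  have hzero : ∀ p, MeasureTheory.volume ((A p : Set (Fin d → ℝ))) = 0 := by
    intro p
    apply Measure.addHaar_affineSubspace
    intro htop
    have hdir : (A p).direction = ⊤ := by rw [htop]; exact AffineSubspace.direction_top ℝ _ _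
    rw [hA] at hdir
    rw [AffineSubspace.direction_mk'] at hdir
    have hle : Module.finrank ℝ (Submodule.span ℝ
        ((Finset.image (fun k => fun (i : Fin d) => if p.1 i = k then (1:ℝ) else 0)
          (Finset.univ.erase p.2)) : Set (Fin d → ℝ))) ≤ m := by
      refine le_trans (finrank_span_finset_le_card _) ?_
      refine le_trans (Finset.card_image_le) ?_
      rw [Finset.card_erase_of_mem (Finset.mem_univ _)]
      simp
    rw [hdir] at hle
    rw [finrank_top] at hle
    rw [Module.finrank_fin_fun] at hle
    omega
  exact measure_mono_null hcov (measure_iUnion_null hzero)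

end Part2

section Main

open Filter Topology MeasureTheory

lemma tendsto_add_smul_pos {E : Type*} [NormedAddCommGroup E] [NormedSpace ℝ E] (y w : E) :
    Filter.Tendsto (fun t : ℝ => y + t • w) (𝓝[>] 0) (𝓝 y) := by
  have h1 : Filter.Tendsto (fun t : ℝ => y + t • w) (𝓝 0) (𝓝 (y + (0:ℝ) • w)) := by
    apply Filter.Tendsto.add tendsto_const_nhds
    exact (continuous_id.smul continuous_const).tendsto 0
  simpa using h1.mono_left nhdsWithin_le_nhds

lemma ext_dir_exists {d : ℕ} (p q : Fin (d+1)) (hpq : p ≠ q) :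
    ∃ u : Fin d → ℝ, 0 < ext u p - ext u q := by
  refine ⟨fun i => (if i.succ = p then (1:ℝ) else 0) - (if i.succ = q then 1 else 0), ?_⟩
  have hval : ∀ j : Fin (d+1),
      ext (fun i => (if i.succ = p then (1:ℝ) else 0) - (if i.succ = q then 1 else 0)) j
        = (if j = p ∧ j ≠ 0 then (1:ℝ) else 0) - (if j = q ∧ j ≠ 0 then 1 else 0) := by
    intro j
    induction j using Fin.cases with
    | zero => simp
    | succ i =>
      rw [ext_succ]
      congr 1
      · by_cases h : i.succ = p
        · rw [if_pos h, if_pos ⟨h, Fin.succ_ne_zero i⟩]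
        · rw [if_neg h, if_neg (fun hc => h hc.1)]
      · by_cases h : i.succ = q
        · rw [if_pos h, if_pos ⟨h, Fin.succ_ne_zero i⟩]
        · rw [if_neg h, if_neg (fun hc => h hc.1)]
  rw [hval p, hval q]
  by_cases hp : p = 0
  · have hq : q ≠ 0 := fun h => hpq (by rw [hp, h])
    rw [if_neg (fun hc : p = p ∧ p ≠ 0 => hc.2 hp),
        if_neg (fun hc : p = q ∧ p ≠ 0 => hc.2 hp),
        if_neg (fun hc : q = p ∧ q ≠ 0 => hpq hc.1.symm),
        if_pos ⟨rfl, hq⟩]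
    norm_num
  · by_cases hq : q = 0
    · rw [if_pos ⟨rfl, hp⟩,
          if_neg (fun hc : p = q ∧ p ≠ 0 => hpq hc.1),
          if_neg (fun hc : q = p ∧ q ≠ 0 => hc.2 hq),
          if_neg (fun hc : q = q ∧ q ≠ 0 => hc.2 hq)]
      norm_num
    · rw [if_pos ⟨rfl, hp⟩,
          if_neg (fun hc : p = q ∧ p ≠ 0 => hpq hc.1),
          if_neg (fun hc : q = p ∧ q ≠ 0 => hpq hc.1.symm),
          if_pos ⟨rfl, hq⟩]
      norm_num

/-- A tropical polytope is the tropical convex hull of a finite set. -/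
def IsTropPolytope {d : ℕ} (P : Set (Fin d → ℝ)) : Prop :=
  ∃ V : Finset (Fin d → ℝ), P = tconv (V : Set (Fin d → ℝ))

/-- A polytrope is a tropical polytope which is also convex in the ordinary sense. -/
def IsPolytrope {d : ℕ} (P : Set (Fin d → ℝ)) : Prop :=
  IsTropPolytope P ∧ Convex ℝ P

/-- A polytrope `P ⊆ ℝ^d` of affine dimension `d` is a tropical simplex:
it is the tropical convex hull of `d+1` points, and not the tropical convex hull
of any set of at most `d` points. -/
theorem polytrope_is_tropical_simplex {d : ℕ} (P : Set (Fin d → ℝ))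
    (hP : IsPolytrope P) (hdim : affineSpan ℝ P = ⊤) :
    (∃ v : Fin (d + 1) → Fin d → ℝ, P = tconv (Set.range v)) ∧
      ∀ W : Set (Fin d → ℝ), W.Finite → W.ncard ≤ d → P ≠ tconv W := by
  classical
  obtain ⟨⟨V, hPV⟩, hconv⟩ := hP
  -- P is nonempty
  have hPne : P.Nonempty := by
    rcases P.eq_empty_or_nonempty with h | h
    · exfalso
      rw [h] at hdim
      rw [AffineSubspace.span_empty] at hdim
      have : (0 : Fin d → ℝ) ∈ (⊤ : AffineSubspace ℝ (Fin d → ℝ)) := trivial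
      rw [← hdim] at this
      exact this
    · exact h
  -- V is nonempty
  have hVne : (V : Set (Fin d → ℝ)).Nonempty := by
    rcases (V : Set (Fin d → ℝ)).eq_empty_or_nonempty with h | h
    · exfalso
      rw [h, tconv_empty] at hPV
      exact hPne.ne_empty hPV
    · exact h
  -- enumerate V
  obtain ⟨n, v, hvrange, -⟩ := exists_enum (V.finite_toSet) hVne
  have hPT : P = Thom v := by
    rw [hPV, ← hvrange, tconv_range_eq_thom]
  have hPcomp : IsCompact P := by rw [hPT]; exact isCompact_thom v
  have hPcl : IsClosed P := hPcomp.isClosed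
  have hint : (interior P).Nonempty :=
    (hconv.interior_nonempty_iff_affineSpan_eq_top).mpr hdim
  -- attained suprema of the difference functionals
  have hatt : ∀ p q : Fin (d+1), ∃ x ∈ P, ∀ y ∈ P,
      ext y p - ext y q ≤ ext x p - ext x q := by
    intro p q
    obtain ⟨x, hxP, hmax⟩ := hPcomp.exists_isMaxOn hPne
      ((continuous_ext p).sub (continuous_ext q)).continuousOn
    exact ⟨x, hxP, fun y hy => hmax hy⟩
  choose att hattP hattM using hatt
  set c : Fin (d+1) → Fin (d+1) → ℝ := fun p q => ext (att p q) p - ext (att p q) q with hc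
  have hcP : ∀ x ∈ P, ∀ p q, ext x p - ext x q ≤ c p q := fun x hx p q => hattM p q x hx
  have hcd : ∀ p, c p p = 0 := by intro p; simp [hc]
  have hcT : ∀ p q r, c p r ≤ c p q + c q r := by
    intro p q r
    have h1 := hcP (att p r) (hattP p r) p q
    have h2 := hcP (att p r) (hattP p r) q r
    simp only [hc] at h1 h2 ⊢
    linarith
  -- the weighted digraph polyhedron
  set Q : Set (Fin d → ℝ) := {x | ∀ p q, ext x p - ext x q ≤ c p q} with hQ
  have hPQ : P ⊆ Q := fun x hx p q => hcP x hx p q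
  have hQconv : Convex ℝ Q := by
    intro x hx y hy a b ha hb hab
    intro p q
    rw [ext_combo, ext_combo]
    have h1 := hx p q
    have h2 := hy p q
    have e1 : a * (ext x p - ext x q) ≤ a * c p q := mul_le_mul_of_nonneg_left h1 ha
    have e2 : b * (ext y p - ext y q) ≤ b * c p q := mul_le_mul_of_nonneg_left h2 hb
    have e3 : a * c p q + b * c p q = c p q := by rw [← add_mul, hab, one_mul]
    nlinarith [e1, e2, e3]
  -- strictness in the interior of Q
  have hstrict : ∀ z ∈ interior Q, ∀ p q : Fin (d+1), p ≠ q →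
      ext z p - ext z q < c p q := by
    intro z hz p q hpq
    obtain ⟨u, hu⟩ := ext_dir_exists p q hpq
    obtain ⟨ε, hε, hball⟩ := Metric.isOpen_iff.mp isOpen_interior z hz
    set t : ℝ := ε / (2 * (‖u‖ + 1)) with htdef
    have ht : 0 < t := by positivity
    have hmem : z + t • u ∈ Q := by
      apply interior_subset
      apply hball
      rw [Metric.mem_ball, dist_eq_norm, add_sub_cancel_left, norm_smul,
        Real.norm_eq_abs, abs_of_pos ht]
      have h1 : 0 ≤ ‖u‖ := norm_nonneg u
      rw [htdef]
      rw [div_mul_eq_mul_div, div_lt_iff₀ (by positivity)]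
      nlinarith
    have h2 := hmem p q
    rw [ext_add, ext_add, ext_smul, ext_smul] at h2
    nlinarith [mul_pos ht hu]
  -- the columns
  set col : Fin (d+1) → Fin d → ℝ := fun q => fun i => c i.succ q - c 0 q with hcol
  have hcolext : ∀ (q : Fin (d+1)) (j : Fin (d+1)), ext (col q) j = c j q - c 0 q := by
    intro q j
    induction j using Fin.cases with
    | zero => rw [ext_zero]; exact (sub_self _).symm
    | succ i => simp [hcol]
  have hcolQ : ∀ q, col q ∈ Q := by
    intro q
    intro p r
    rw [hcolext, hcolext]
    have := hcT p r q
    linarith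
  -- Q is contained in the tropical hull of the columns
  have hQT : Q ⊆ Thom col := by
    intro z hz
    refine ⟨fun q => ext z q + c 0 q, fun i => ?_⟩
    apply le_antisymm
    · apply Finset.le_inf'
      intro q _
      dsimp only
      rw [hcolext]
      have := hz i q
      linarith
    · refine le_trans (Finset.inf'_le _ (Finset.mem_univ i)) ?_
      dsimp only
      rw [hcolext]
      rw [hcd i]
      linarith
  -- interior of Q is contained in P (the key geometric step)
  have hintQP : interior Q ⊆ P := by
    intro z hz
    by_contra hzP
    obtain ⟨p₀, hp₀⟩ := id hint
    set f : ℝ → (Fin d → ℝ) := fun t => p₀ + t • (z - p₀) with hf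
    have hfc : Continuous f := continuous_const.add (continuous_id.smul continuous_const)
    have hf0 : f 0 = p₀ := by simp [hf]
    have hf1 : f 1 = z := by simp [hf]
    set Aset : Set ℝ := Set.Icc (0:ℝ) 1 ∩ f ⁻¹' P with hAset
    have hA0 : (0:ℝ) ∈ Aset := ⟨⟨le_refl 0, zero_le_one⟩, by
      rw [Set.mem_preimage, hf0]; exact interior_subset hp₀⟩
    have hAc : IsCompact Aset := isCompact_Icc.inter_right (hPcl.preimage hfc)
    set tstar := sSup Aset with htstar
    have htmem : tstar ∈ Aset := hAc.sSup_mem ⟨0, hA0⟩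
    set b := f tstar with hb
    have hbP : b ∈ P := htmem.2
    have ht0 : 0 ≤ tstar := htmem.1.1
    have ht1' : tstar ≤ 1 := htmem.1.2
    have ht1 : tstar < 1 := by
      rcases lt_or_eq_of_le ht1' with h | h
      · exact h
      · exfalso
        apply hzP
        rw [← hf1, ← h]
        exact hbP
    have hbni : b ∉ interior P := by
      intro hbint
      have hmemnb : P ∈ 𝓝 b := mem_interior_iff_mem_nhds.mp hbint
      have hev : ∀ᶠ t in 𝓝 tstar, f t ∈ P := (hfc.tendsto tstar).eventually_mem hmemnb
      obtain ⟨ε, hε, hball'⟩ := Metric.eventually_nhds_iff.mp hev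
      have hmin : 0 < min (ε/2) ((1 - tstar)/2) := lt_min (by linarith) (by linarith)
      have hminl : min (ε/2) ((1 - tstar)/2) ≤ ε/2 := min_le_left _ _
      have hminr : min (ε/2) ((1 - tstar)/2) ≤ (1 - tstar)/2 := min_le_right _ _
      have ht'A : tstar + min (ε/2) ((1 - tstar)/2) ∈ Aset := by
        refine ⟨⟨by linarith, by linarith⟩, ?_⟩
        rw [Set.mem_preimage]
        apply hball'
        rw [Real.dist_eq]
        have heq : tstar + min (ε/2) ((1 - tstar)/2) - tstar
            = min (ε/2) ((1 - tstar)/2) := by ring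
        rw [heq, abs_of_pos hmin]
        linarith
      have hle := le_csSup hAc.bddAbove ht'A
      rw [← htstar] at hle
      linarith
    have hbfr : b ∈ frontier P := by
      rw [hPcl.frontier_eq]
      exact ⟨hbP, hbni⟩
    have hbQ : b ∈ interior Q := by
      have h1 : p₀ ∈ interior Q := interior_mono hPQ hp₀
      have h2 := (hQconv.interior) h1 hz (by linarith : (0:ℝ) ≤ 1 - tstar) ht0 (by ring)
      rw [hb, hf]
      convert h2 using 1
      module
    obtain ⟨r₀, hr₀, hball₀⟩ := Metric.isOpen_iff.mp isOpen_interior b hbQ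
    -- hyperplane family
    set C : Fin (n+1) × Fin (d+1) × Fin (d+1) → Set (Fin d → ℝ) := fun i =>
      if i.2.1 = i.2.2 then ∅
      else {y | ext y i.2.1 - ext y i.2.2 = ext (v i.1) i.2.1 - ext (v i.1) i.2.2} with hC
    have hCcl : ∀ i, IsClosed (C i) := by
      intro i
      simp only [hC]
      by_cases h : i.2.1 = i.2.2
      · rw [if_pos h]; exact isClosed_empty
      · rw [if_neg h]
        exact isClosed_eq ((continuous_ext _).sub (continuous_ext _)) continuous_const
    have hclT : IsClosed (Thom v) := (isCompact_thom v).isClosed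
    have hcover : frontier P ∩ Metric.ball b r₀ ⊆
        ⋃ i ∈ (Finset.univ : Finset (Fin (n+1) × Fin (d+1) × Fin (d+1))), C i := by
      rintro x ⟨hxf, -⟩
      have hxf' : x ∈ frontier (Thom v) := by rwa [← hPT]
      obtain ⟨k, p, q, hpq, heq⟩ := frontier_cover v x hclT hxf'
      refine Set.mem_biUnion (Finset.mem_univ (k, p, q)) ?_
      simp only [hC]
      rw [if_neg hpq]
      exact heq
    obtain ⟨i, -, Vop, hVo, hVsub, ⟨x₀, hx₀f, hx₀V⟩, hVC⟩ :=
      finite_cover_interior Finset.univ C hCcl (frontier P) (Metric.ball b r₀)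
        Metric.isOpen_ball hcover ⟨b, hbfr, Metric.mem_ball_self hr₀⟩
    obtain ⟨k, p, q⟩ := i
    have hx₀C := hVC ⟨hx₀f, hx₀V⟩
    have hpq : p ≠ q := by
      intro h
      simp only [hC] at hx₀C
      rw [if_pos h] at hx₀C
      exact hx₀C
    simp only [hC] at hx₀C
    rw [if_neg hpq] at hx₀C
    -- the linear functional
    set gfun : (Fin d → ℝ) → ℝ := fun y => ext y p - ext y q with hgfun
    have hg : IsLinearMap ℝ gfun := by
      constructor
      · intro a b'
        simp only [hgfun, ext_add]
        ring
      · intro s a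
        simp only [hgfun, ext_smul, smul_eq_mul]
        ring
    obtain ⟨u, hu⟩ := ext_dir_exists p q hpq
    obtain ⟨ρ, hρ, hballρ⟩ := Metric.isOpen_iff.mp hVo x₀ hx₀V
    set γ : ℝ := ext (v k) p - ext (v k) q with hγ
    have hγx₀ : gfun x₀ = γ := hx₀C
    have hfr : ∀ y ∈ frontier P ∩ Metric.ball x₀ ρ, gfun y = γ := by
      rintro y ⟨hyf, hyb⟩
      have := hVC ⟨hyf, hballρ hyb⟩
      simp only [hC] at this
      rw [if_neg hpq] at this
      exact this
    have hx₀Q : x₀ ∈ interior Q := hball₀ (hVsub hx₀V)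
    have hx₀P : x₀ ∈ P := by
      rw [hPcl.frontier_eq] at hx₀f
      exact hx₀f.1
    rcases one_sided hconv hPcl hint hg hu hρ hx₀f hγx₀ hfr with hle | hge
    · have h1 : c p q ≤ γ := hle (att p q) (hattP p q)
      have h2 := hstrict x₀ hx₀Q p q hpq
      rw [← hγx₀] at h1
      simp only [hgfun] at h1
      linarith
    · have h1 : c q p ≤ -γ := by
        have := hge (att q p) (hattP q p)
        simp only [hgfun, hc] at this ⊢
        linarith
      have h2 := hstrict x₀ hx₀Q q p (Ne.symm hpq)
      have h3 : ext x₀ q - ext x₀ p = -γ := by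
        simp only [hgfun] at hγx₀
        linarith
      linarith
  -- Q ⊆ P by approximating from the interior
  have hQP : Q ⊆ P := by
    intro z hz
    obtain ⟨p₀, hp₀⟩ := id hint
    have hp₀Q : p₀ ∈ interior Q := interior_mono hPQ hp₀
    have hev : ∀ᶠ t in 𝓝[>] (0:ℝ), z + t • (p₀ - z) ∈ P := by
      have hev1 : ∀ᶠ t in 𝓝[>] (0:ℝ), t ≤ 1 :=
        eventually_nhdsWithin_of_eventually_nhds
          (Filter.Tendsto.eventually_le_const (by norm_num : (0:ℝ) < 1) tendsto_id)
      filter_upwards [hev1, self_mem_nhdsWithin] with t ht1 ht0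
      have ht0' : (0:ℝ) < t := ht0
      exact hintQP (hQconv.add_smul_sub_mem_interior' (subset_closure hz) hp₀Q ⟨ht0', ht1⟩)
    exact hPcl.mem_of_tendsto (tendsto_add_smul_pos z (p₀ - z)) hev
  -- Part 1
  have hPcolT : P = Thom col := by
    apply Set.Subset.antisymm
    · exact Set.Subset.trans hPQ hQT
    · refine thom_subset col P ?_ (fun q => hQP (hcolQ q))
      rw [hPV]
      exact tropConvex_tconv _
  constructor
  · refine ⟨col, ?_⟩
    rw [tconv_range_eq_thom]
    exact hPcolT
  -- Part 2
  · intro W hWfin hWcard hPW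
    have hWne : W.Nonempty := by
      rcases W.eq_empty_or_nonempty with h | h
      · exfalso
        rw [h, tconv_empty] at hPW
        exact hPne.ne_empty hPW
      · exact h
    obtain ⟨m, w, hwrange, hwcard⟩ := exists_enum hWfin hWne
    have hm : m + 1 ≤ d := by
      rw [hwcard]
      exact hWcard
    have hPW' : P = Thom w := by
      rw [hPW, ← hwrange, tconv_range_eq_thom]
    have hvol : MeasureTheory.volume P = 0 := by
      rw [hPW']
      exact thom_volume_zero hm w
    have hpos : 0 < MeasureTheory.volume P := by
      refine lt_of_lt_of_le ?_ (measure_mono (interior_subset))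
      exact (isOpen_interior).measure_pos MeasureTheory.volume hint
    rw [hvol] at hpos
    exact lt_irrefl 0 hpos

end Main
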